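/- Let G = ∏_{i=1}^k ℤ/N_i with all N_i even. Let λ = Σ_i p_i w_i + Σ_{i<j} p_{ij} w_{ij} (mod 2), where p_i, p_{ij} ∈ {0,1}, w_i(a,b) = (a_i + b_i - [a_i+b_i]_{N_i})/N_i, and w_{ij}(a,b) = a_i b_j mod 2. Then the invariants Ω_i(λ) := Σ_{n=0}^{N_i-1} λ(n·e_i, e_i) (mod 2) and Ω_{ij}(λ) := λ(e_i,e_j) - λ(e_j,e_i) (mod 2) evaluate to Ω_i(λ) = p_i and Ω_{ij}(λ) = p_{ij} for i < j. -/
import Mathlib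


/-- The 2-cocycle `w_i(a,b) = (a_i + b_i - [a_i+b_i]_{N_i})/N_i` on `∏ₗ ℤ/Nₗ`,
valued in `ℤ/2`. -/
def wI {k : ℕ} (N : Fin k → ℕ) (i : Fin k) (a b : ∀ l, ZMod (N l)) : ZMod 2 :=
  (((((a i).val + (b i).val - (a i + b i).val) / N i : ℕ)) : ZMod 2)

/-- The 2-cocycle `w_{ij}(a,b) = a_i b_j (mod 2)` on `∏ₗ ℤ/Nₗ`. -/
def wIJ {k : ℕ} (N : Fin k → ℕ) (i j : Fin k) (a b : ∀ l, ZMod (N l)) : ZMod 2 :=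
  ((((a i).val * (b j).val : ℕ)) : ZMod 2)

/-- The general 2-cocycle `λ = Σᵢ pᵢ wᵢ + Σ_{i<j} p_{ij} w_{ij}` on `∏ₗ ℤ/Nₗ`. -/
def lamP {k : ℕ} (N : Fin k → ℕ) (p : Fin k → ZMod 2) (pij : Fin k → Fin k → ZMod 2)
    (a b : ∀ l, ZMod (N l)) : ZMod 2 :=
  (∑ i, p i * wI N i a b) + ∑ i, ∑ j, if i < j then pij i j * wIJ N i j a b else 0

lemma wI_eq_zero {k : ℕ} {N : Fin k → ℕ} [∀ l, NeZero (N l)] {i : Fin k}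
    {a b : ∀ l, ZMod (N l)} (h : (a i).val + (b i).val < N i) : wI N i a b = 0 := by
  unfold wI
  rw [ZMod.val_add_of_lt h]
  simp

lemma wIJ_left_zero {k : ℕ} {N : Fin k → ℕ} [∀ l, NeZero (N l)] {i j : Fin k}
    {a b : ∀ l, ZMod (N l)} (h : a i = 0) : wIJ N i j a b = 0 := by
  unfold wIJ
  rw [h, ZMod.val_zero]
  simp

lemma wIJ_right_zero {k : ℕ} {N : Fin k → ℕ} [∀ l, NeZero (N l)] {i j : Fin k}
    {a b : ∀ l, ZMod (N l)} (h : b j = 0) : wIJ N i j a b = 0 := by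
  unfold wIJ
  rw [h, ZMod.val_zero]
  simp

lemma lamP_single {k : ℕ} {N : Fin k → ℕ} [∀ l, NeZero (N l)] (h2 : ∀ l, 2 ≤ N l)
    (p : Fin k → ZMod 2) (pij : Fin k → Fin k → ZMod 2) {i j : Fin k} (hij : i ≠ j) :
    lamP N p pij (Pi.single i (1 : ZMod (N i))) (Pi.single j (1 : ZMod (N j)))
      = if i < j then pij i j else 0 := by
  have hval1 : ∀ l, (1 : ZMod (N l)).val = 1 := fun l => by
    haveI : Fact (1 < N l) := ⟨h2 l⟩
    exact ZMod.val_one _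
  have hvs : ∀ (m l : Fin k), ((Pi.single m (1 : ZMod (N m)) : ∀ l, ZMod (N l)) l).val ≤
      if l = m then 1 else 0 := by
    intro m l
    by_cases h : l = m
    · subst h; simp [Pi.single_eq_same, hval1]
    · simp [Pi.single_eq_of_ne h]
  unfold lamP
  have hwI : ∀ l, wI N l (Pi.single i (1 : ZMod (N i))) (Pi.single j (1 : ZMod (N j))) = 0 := by
    intro l
    apply wI_eq_zero
    have hN := h2 l
    by_cases hli : l = i
    · subst hli
      rw [Pi.single_eq_same, hval1, Pi.single_eq_of_ne hij, ZMod.val_zero]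
      omega
    · rw [Pi.single_eq_of_ne hli, ZMod.val_zero, zero_add]
      by_cases hlj : l = j
      · subst hlj
        rw [Pi.single_eq_same, hval1]
        omega
      · rw [Pi.single_eq_of_ne hlj, ZMod.val_zero]
        omega
  have hfirst : (∑ l, p l * wI N l (Pi.single i (1 : ZMod (N i)))
      (Pi.single j (1 : ZMod (N j)))) = 0 := by
    apply Finset.sum_eq_zero
    intro l _
    rw [hwI l, mul_zero]
  rw [hfirst, zero_add]
  have hsec : (∑ l, ∑ m, if l < m then pij l m * wIJ N l m (Pi.single i (1 : ZMod (N i)))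
      (Pi.single j (1 : ZMod (N j))) else 0)
      = if i < j then pij i j else 0 := by
    rw [Finset.sum_eq_single i]
    · rw [Finset.sum_eq_single j]
      · split_ifs with h
        · unfold wIJ
          rw [Pi.single_eq_same, Pi.single_eq_same, hval1, hval1]
          simp
        · rfl
      · intro m _ hm
        split_ifs with h
        · rw [wIJ_right_zero (Pi.single_eq_of_ne hm _), mul_zero]
        · rfl
      · intro h; exact absurd (Finset.mem_univ j) h
    · intro l _ hl
      apply Finset.sum_eq_zero
      intro m _
      split_ifs with h
      · by_cases hm : m = j
        · rw [wIJ_left_zero (Pi.single_eq_of_ne hl _), mul_zero]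
        · rw [wIJ_right_zero (Pi.single_eq_of_ne hm _), mul_zero]
      · rfl
    · intro h; exact absurd (Finset.mem_univ i) h
  rw [hsec]

/-- For `G = ∏ᵢ ℤ/Nᵢ` with all `Nᵢ` even and `λ = Σᵢ pᵢ wᵢ + Σ_{i<j} p_{ij} w_{ij}`,
the invariants evaluate to `Ωᵢ(λ) = Σ_{n<Nᵢ} λ(n·eᵢ, eᵢ) = pᵢ` and, for `i < j`,
`Ω_{ij}(λ) = λ(eᵢ,eⱼ) - λ(eⱼ,eᵢ) = p_{ij}`. -/
theorem stmt_19 {k : ℕ} (N : Fin k → ℕ) (hpos : ∀ i, 0 < N i) (heven : ∀ i, Even (N i))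
    (p : Fin k → ZMod 2) (pij : Fin k → Fin k → ZMod 2) :
    (∀ i : Fin k,
      (∑ n ∈ Finset.range (N i),
          lamP N p pij (n • Pi.single i (1 : ZMod (N i))) (Pi.single i (1 : ZMod (N i))))
        = p i)
    ∧ ∀ i j : Fin k, i < j →
        lamP N p pij (Pi.single i (1 : ZMod (N i))) (Pi.single j (1 : ZMod (N j)))
            - lamP N p pij (Pi.single j (1 : ZMod (N j))) (Pi.single i (1 : ZMod (N i)))
          = pij i j := by
  haveI : ∀ l, NeZero (N l) := fun l => ⟨(hpos l).ne'⟩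
  have h2 : ∀ l, 2 ≤ N l := fun l => by
    rcases heven l with ⟨m, hm⟩
    have := hpos l
    omega
  have hval1 : ∀ l, (1 : ZMod (N l)).val = 1 := fun l => by
    haveI : Fact (1 < N l) := ⟨h2 l⟩
    exact ZMod.val_one _
  constructor
  · intro i
    have hai : ∀ n : ℕ, ((n • Pi.single i (1 : ZMod (N i)) : ∀ l, ZMod (N l)) i)
        = (n : ZMod (N i)) := by
      intro n
      simp [Pi.smul_apply, Pi.single_eq_same, nsmul_eq_mul]
    have hal : ∀ (n : ℕ) (l : Fin k), l ≠ i →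
        ((n • Pi.single i (1 : ZMod (N i)) : ∀ l, ZMod (N l)) l) = 0 := by
      intro n l hl
      simp [Pi.smul_apply, Pi.single_eq_of_ne hl]
    have hlam : ∀ n : ℕ,
        lamP N p pij (n • Pi.single i (1 : ZMod (N i))) (Pi.single i (1 : ZMod (N i)))
          = p i * wI N i (n • Pi.single i (1 : ZMod (N i))) (Pi.single i (1 : ZMod (N i))) := by
      intro n
      unfold lamP
      have hsec : (∑ l, ∑ m, if l < m then pij l m *
          wIJ N l m (n • Pi.single i (1 : ZMod (N i))) (Pi.single i (1 : ZMod (N i)))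
          else 0) = 0 := by
        apply Finset.sum_eq_zero
        intro l _
        apply Finset.sum_eq_zero
        intro m _
        split_ifs with hlm
        · by_cases hm : m = i
          · subst hm
            have hl : l ≠ m := ne_of_lt hlm
            rw [wIJ_left_zero (hal n l hl), mul_zero]
          · rw [wIJ_right_zero (Pi.single_eq_of_ne hm _), mul_zero]
        · rfl
      rw [hsec, add_zero]
      rw [Finset.sum_eq_single i]
      · intro l _ hl
        rw [wI_eq_zero, mul_zero]
        rw [hal n l hl, Pi.single_eq_of_ne hl, ZMod.val_zero]
        simpa using hpos l
      · intro h; exact absurd (Finset.mem_univ i) h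
    simp only [hlam]
    rw [← Finset.mul_sum]
    have hsum : (∑ n ∈ Finset.range (N i),
        wI N i (n • Pi.single i (1 : ZMod (N i))) (Pi.single i (1 : ZMod (N i)))) = 1 := by
      rw [Finset.sum_eq_single (N i - 1)]
      · unfold wI
        rw [hai, Pi.single_eq_same, hval1]
        have hlt : N i - 1 < N i := Nat.sub_lt (hpos i) one_pos
        rw [ZMod.val_natCast_of_lt hlt]
        have : ((N i - 1 : ℕ) : ZMod (N i)) + 1 = 0 := by
          have : (((N i - 1) + 1 : ℕ) : ZMod (N i)) = 0 := by
            rw [show N i - 1 + 1 = N i by omega]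
            exact ZMod.natCast_self _
          rwa [Nat.cast_add, Nat.cast_one] at this
        rw [this, ZMod.val_zero]
        rw [show N i - 1 + 1 - 0 = N i by omega, Nat.div_self (hpos i)]
        simp
      · intro n hn hne
        rw [Finset.mem_range] at hn
        apply wI_eq_zero
        rw [hai, Pi.single_eq_same, hval1, ZMod.val_natCast_of_lt hn]
        omega
      · intro h
        exact absurd (Finset.mem_range.mpr (Nat.sub_lt (hpos i) one_pos)) h
    rw [hsum, mul_one]
  · intro i j hij
    rw [lamP_single h2 p pij (ne_of_lt hij), lamP_single h2 p pij (ne_of_gt hij),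
      if_pos hij, if_neg (not_lt_of_gt hij), sub_zero]
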